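/- (Condition number and Fekete points.) Let z_1,…,z_d ∈ ℂ be pairwise distinct, let ζ_i = ζ(z_i) ∈ S(1/2), and let h(x_0,x_1) = c·∏_{i=1}^d (x_1 − z_i·x_0) with c ∈ ℂ∖{0}, a homogeneous polynomial of degree d whose roots correspond to z_1,…,z_d. Then max_{1≤i≤d} μ(h, z_i) ≤ √(d(d+1))·e^{E(ζ_1,…,ζ_d) − m_d}. In particular, if ζ_1,…,ζ_d is a set of elliptic Fekete points (i.e. E(ζ_1,…,ζ_d) = m_d), then max_{1≤i≤d} μ(h, z_i) ≤ √(d(d+1)). -/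

import Mathlib

noncomputable section

open Polynomial

/-- `ℝ³` with its Euclidean structure. -/
abbrev E3 : Type := EuclideanSpace ℝ (Fin 3)

/-- The Riemann sphere `S(1/2) ⊂ ℝ³`: the sphere of radius `1/2` centered at `(0,0,1/2)`. -/
def riemannSphere : Set E3 :=
  Metric.sphere ((WithLp.equiv 2 (Fin 3 → ℝ)).symm ![0, 0, 1/2]) (1/2)

/-- The identification `ℂ → S(1/2)`, `z ↦ ((Re z)/(1+|z|²), (Im z)/(1+|z|²), 1/(1+|z|²))`. -/
def toRiemannSphere (z : ℂ) : E3 :=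
  (WithLp.equiv 2 (Fin 3 → ℝ)).symm
    ![z.re / (1 + ‖z‖ ^ 2), z.im / (1 + ‖z‖ ^ 2),
      1 / (1 + ‖z‖ ^ 2)]

/-- The logarithmic energy `E(x_1,…,x_d) = −∑_{i<j} log‖x_i − x_j‖`. -/
def logEnergy {d : ℕ} (x : Fin d → E3) : ℝ :=
  -∑ p ∈ Finset.univ.filter (fun p : Fin d × Fin d => p.1 < p.2),
      Real.log (dist (x p.1) (x p.2))

/-- The minimal logarithmic energy `m_d` of `d` (pairwise distinct) points on `S(1/2)`. -/
def minEnergy (d : ℕ) : ℝ :=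
  sInf { e : ℝ | ∃ x : Fin d → E3,
    (∀ i, x i ∈ riemannSphere) ∧ Function.Injective x ∧ logEnergy x = e }

/-- The Bombieri–Weyl norm of the degree-`d` binary form `h = ∑_k f_k·x_0^{d−k}x_1^k`
determined by a univariate polynomial `f` of degree (at most) `d`:
`‖h‖² = ∑_k |f_k|²·(d−k)!k!/d! = ∑_k |f_k|²/binom(d,k)`. -/
def bwNormBinary (d : ℕ) (f : Polynomial ℂ) : ℝ :=
  Real.sqrt (∑ k ∈ Finset.range (d + 1), ‖f.coeff k‖ ^ 2 / (d.choose k))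

/-- The condition number `μ(h,z) = d^{1/2}·(1+|z|²)^{(d−2)/2}·‖h‖/|f′(z)|` of the binary form
`h` of degree `d` with dehomogenization `f(w) = h(1,w)` at a simple root `z` of `f`. -/
def muUnivariate (d : ℕ) (f : Polynomial ℂ) (z : ℂ) : ℝ :=
  Real.sqrt d * (1 + ‖z‖ ^ 2) ^ (((d : ℝ) - 2) / 2) * bwNormBinary d f /
    ‖f.derivative.eval z‖

namespace SSAux

/-- shorthand -/
def A (z : ℂ) : ℝ := 1 + ‖z‖ ^ 2

lemma A_pos (z : ℂ) : 0 < A z := by unfold A; positivity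

lemma A_one_le (z : ℂ) : 1 ≤ A z := by
  unfold A; have := sq_nonneg (‖z‖); linarith

lemma dist_toRS (a b : ℂ) :
    dist (toRiemannSphere a) (toRiemannSphere b) =
      ‖a - b‖ / Real.sqrt (A a * A b) := by
  have hA : (0:ℝ) < A a := A_pos a
  have hB : (0:ℝ) < A b := A_pos b
  unfold A at *
  rw [EuclideanSpace.dist_eq]
  have key : ∑ i, dist (toRiemannSphere a i) (toRiemannSphere b i) ^ 2
      = ‖a-b‖^2 / ((1 + ‖a‖ ^ 2) * (1 + ‖b‖ ^ 2)) := by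
    have e0 : ∀ w : ℂ, ‖w‖ ^ 2 = w.re^2 + w.im^2 := by
      intro w; rw [Complex.sq_norm, Complex.normSq_apply]; ring
    simp only [Fin.sum_univ_three, toRiemannSphere, Real.dist_eq, sq_abs]
    simp only [toRiemannSphere, WithLp.equiv_symm_apply, PiLp.toLp_apply, Matrix.cons_val_zero,
      Matrix.cons_val_one, Matrix.head_cons]
    rw [show ((2:Fin 3)) = 2 from rfl]
    simp only [Matrix.cons_val_two, Matrix.tail_cons, Matrix.head_cons]
    rw [e0 a, e0 b, e0 (a-b)]
    simp only [Complex.sub_re, Complex.sub_im]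
    field_simp
    ring
  rw [key, Real.sqrt_div (by positivity), Real.sqrt_sq (norm_nonneg _)]

lemma toRS_mem (z : ℂ) : toRiemannSphere z ∈ riemannSphere := by
  have hA : (0:ℝ) < 1 + ‖z‖ ^ 2 := by positivity
  have e0 : ‖z‖ ^ 2 = z.re^2 + z.im^2 := by
    rw [Complex.sq_norm, Complex.normSq_apply]; ring
  simp only [riemannSphere, Metric.mem_sphere, EuclideanSpace.dist_eq]
  have key : ∑ i, (dist (toRiemannSphere z i)
      (((WithLp.equiv 2 (Fin 3 → ℝ)).symm ![0, 0, 1/2]) i)) ^ 2 = (1/2)^2 := by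
    simp only [Fin.sum_univ_three, toRiemannSphere, WithLp.equiv_symm_apply, PiLp.toLp_apply,
      Matrix.cons_val_zero, Matrix.cons_val_one, Matrix.head_cons, Real.dist_eq, sq_abs]
    rw [show ((2:Fin 3)) = 2 from rfl]
    simp only [Matrix.cons_val_two, Matrix.tail_cons, Matrix.head_cons]
    rw [e0] at hA ⊢
    field_simp
    ring
  rw [key, Real.sqrt_sq (by norm_num)]

lemma toRS_inj : Function.Injective toRiemannSphere := by
  intro a b hab
  have h := dist_toRS a b
  rw [hab, dist_self] at h
  have hs : (0:ℝ) < Real.sqrt (A a * A b) :=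
    Real.sqrt_pos.2 (mul_pos (A_pos a) (A_pos b))
  rcases div_eq_zero_iff.1 h.symm with h2 | h2
  · have : a = b := by simpa [sub_eq_zero] using h2
    exact this
  · exact absurd h2 (ne_of_gt hs)

lemma dist_sphere_le_one {x y : E3} (hx : x ∈ riemannSphere) (hy : y ∈ riemannSphere) :
    dist x y ≤ 1 := by
  simp only [riemannSphere, Metric.mem_sphere] at hx hy
  calc dist x y ≤ dist x _ + dist _ y := dist_triangle _ _ _
  _ ≤ 1 := by rw [hx, dist_comm _ y, hy]; norm_num

lemma dist_toRS_le_one (a b : ℂ) : dist (toRiemannSphere a) (toRiemannSphere b) ≤ 1 :=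
  dist_sphere_le_one (toRS_mem a) (toRS_mem b)

lemma logEnergy_nonneg {d : ℕ} (x : Fin d → E3) (hx : ∀ i, x i ∈ riemannSphere) :
    0 ≤ logEnergy x := by
  unfold logEnergy
  rw [neg_nonneg]
  apply Finset.sum_nonpos
  intro p _
  exact Real.log_nonpos dist_nonneg (dist_sphere_le_one (hx p.1) (hx p.2))

lemma minEnergy_le {d : ℕ} (x : Fin d → E3) (h1 : ∀ i, x i ∈ riemannSphere)
    (h2 : Function.Injective x) : minEnergy d ≤ logEnergy x := by
  apply csInf_le
  · refine ⟨0, ?_⟩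
    rintro e ⟨y, hy1, _, rfl⟩
    exact logEnergy_nonneg y hy1
  · exact ⟨x, h1, h2, rfl⟩

lemma minEnergy_nonneg {d : ℕ} (x : Fin d → E3) (h1 : ∀ i, x i ∈ riemannSphere)
    (h2 : Function.Injective x) : 0 ≤ minEnergy d := by
  have hne : logEnergy x ∈ { e : ℝ | ∃ y : Fin d → E3,
      (∀ i, y i ∈ riemannSphere) ∧ Function.Injective y ∧ logEnergy y = e } := ⟨x, h1, h2, rfl⟩
  apply le_csInf ⟨_, hne⟩
  rintro e ⟨y, hy1, _, rfl⟩
  exact logEnergy_nonneg y hy1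

/-- logEnergy as a half of the full double sum. -/
lemma logEnergy_eq {d : ℕ} (x : Fin d → E3) :
    logEnergy x = -(1/2) * ∑ j, ∑ k, Real.log (dist (x j) (x k)) := by
  classical
  set F : Fin d × Fin d → ℝ := fun p => Real.log (dist (x p.1) (x p.2)) with hF
  have h0 : ∑ j, ∑ k, Real.log (dist (x j) (x k)) = ∑ p : Fin d × Fin d, F p := by
    rw [← Finset.univ_product_univ, Finset.sum_product]
  have h1 : ∑ p : Fin d × Fin d, F p =
      (∑ p ∈ Finset.univ.filter (fun p : Fin d × Fin d => p.1 < p.2), F p) +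
      (∑ p ∈ Finset.univ.filter (fun p : Fin d × Fin d => ¬ p.1 < p.2), F p) :=
    (Finset.sum_filter_add_sum_filter_not _ _ _).symm
  have h2 : ∑ p ∈ Finset.univ.filter (fun p : Fin d × Fin d => ¬ p.1 < p.2), F p =
      (∑ p ∈ (Finset.univ.filter (fun p : Fin d × Fin d => ¬ p.1 < p.2)).filter
        (fun p => p.2 < p.1), F p) +
      (∑ p ∈ (Finset.univ.filter (fun p : Fin d × Fin d => ¬ p.1 < p.2)).filter
        (fun p => ¬ p.2 < p.1), F p) :=
    (Finset.sum_filter_add_sum_filter_not _ _ _).symm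
  have e1 : (Finset.univ.filter (fun p : Fin d × Fin d => ¬ p.1 < p.2)).filter
      (fun p => p.2 < p.1) = Finset.univ.filter (fun p : Fin d × Fin d => p.2 < p.1) := by
    rw [Finset.filter_filter]
    apply Finset.filter_congr
    intro p _
    constructor
    · rintro ⟨_, h⟩; exact h
    · intro h; exact ⟨asymm h, h⟩
  have e2 : ∑ p ∈ (Finset.univ.filter (fun p : Fin d × Fin d => ¬ p.1 < p.2)).filter
      (fun p => ¬ p.2 < p.1), F p = 0 := by
    apply Finset.sum_eq_zero
    intro p hp
    simp only [Finset.mem_filter] at hp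
    have : p.1 = p.2 := le_antisymm (not_lt.1 hp.2) (not_lt.1 hp.1.2)
    simp [hF, this, Real.log_zero]
  have e3 : ∑ p ∈ Finset.univ.filter (fun p : Fin d × Fin d => p.2 < p.1), F p =
      ∑ p ∈ Finset.univ.filter (fun p : Fin d × Fin d => p.1 < p.2), F p := by
    apply Finset.sum_nbij' (fun p => Prod.swap p) (fun p => Prod.swap p)
    · intro p hp; simp only [Finset.mem_filter] at hp ⊢; exact ⟨Finset.mem_univ _, hp.2⟩
    · intro p hp; simp only [Finset.mem_filter] at hp ⊢; exact ⟨Finset.mem_univ _, hp.2⟩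
    · intro p _; simp
    · intro p _; simp
    · intro p _; simp only [hF, Prod.fst_swap, Prod.snd_swap]; rw [dist_comm]
  unfold logEnergy
  rw [h0, h1, h2, e1, e2, e3]
  ring

lemma logEnergy_update {d : ℕ} (x : Fin d → E3) (i : Fin d) (v : E3) :
    logEnergy (Function.update x i v) = logEnergy x +
      ∑ k ∈ Finset.univ.erase i,
        (Real.log (dist (x i) (x k)) - Real.log (dist v (x k))) := by
  classical
  have split : ∀ y : Fin d → E3, ∑ j, ∑ k, Real.log (dist (y j) (y k)) =
      (Real.log (dist (y i) (y i)) + ∑ k ∈ Finset.univ.erase i, Real.log (dist (y i) (y k))) +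
      ∑ j ∈ Finset.univ.erase i,
        (Real.log (dist (y j) (y i)) + ∑ k ∈ Finset.univ.erase i, Real.log (dist (y j) (y k))) := by
    intro y
    rw [← Finset.add_sum_erase _ _ (Finset.mem_univ i)]
    congr 1
    · rw [← Finset.add_sum_erase _ _ (Finset.mem_univ i)]
    · exact Finset.sum_congr rfl fun j _ => by
        rw [← Finset.add_sum_erase _ _ (Finset.mem_univ i)]
  rw [logEnergy_eq, logEnergy_eq x, split, split x]
  have hui : Function.update x i v i = v := Function.update_self i v x
  have huj : ∀ j : Fin d, j ∈ Finset.univ.erase i → Function.update x i v j = x j := by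
    intro j hj
    exact Function.update_of_ne (Finset.mem_erase.1 hj).1 v x
  rw [hui]
  rw [Finset.sum_congr rfl (fun k hk => by rw [huj k hk] : ∀ k ∈ Finset.univ.erase i,
    Real.log (dist v (Function.update x i v k)) = Real.log (dist v (x k)))]
  rw [Finset.sum_congr rfl (fun j hj => by
    rw [huj j hj,
      Finset.sum_congr rfl (fun k hk => by rw [huj k hk])] : ∀ j ∈ Finset.univ.erase i,
    (Real.log (dist (Function.update x i v j) v) +
      ∑ k ∈ Finset.univ.erase i,
        Real.log (dist (Function.update x i v j) (Function.update x i v k))) =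
    (Real.log (dist (x j) v) + ∑ k ∈ Finset.univ.erase i, Real.log (dist (x j) (x k))))]
  have hsymm1 : ∑ j ∈ Finset.univ.erase i,
      (Real.log (dist (x j) v) + ∑ k ∈ Finset.univ.erase i, Real.log (dist (x j) (x k))) =
      (∑ j ∈ Finset.univ.erase i, Real.log (dist v (x j))) +
      ∑ j ∈ Finset.univ.erase i, ∑ k ∈ Finset.univ.erase i, Real.log (dist (x j) (x k)) := by
    rw [Finset.sum_add_distrib]
    congr 1
    exact Finset.sum_congr rfl fun j _ => by rw [dist_comm]
  have hsymm2 : ∑ j ∈ Finset.univ.erase i,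
      (Real.log (dist (x j) (x i)) + ∑ k ∈ Finset.univ.erase i, Real.log (dist (x j) (x k))) =
      (∑ j ∈ Finset.univ.erase i, Real.log (dist (x i) (x j))) +
      ∑ j ∈ Finset.univ.erase i, ∑ k ∈ Finset.univ.erase i, Real.log (dist (x j) (x k)) := by
    rw [Finset.sum_add_distrib]
    congr 1
    exact Finset.sum_congr rfl fun j _ => by rw [dist_comm]
  rw [hsymm1, hsymm2, dist_self, dist_self, Real.log_zero, Finset.sum_sub_distrib]
  ring

/-- The replacement inequality. -/
lemma replacement {d : ℕ} (z : Fin d → ℂ) (hz : Function.Injective z) (i : Fin d) (w : ℂ) :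
    ∏ k ∈ Finset.univ.erase i, dist (toRiemannSphere w) (toRiemannSphere (z k)) ≤
      (∏ k ∈ Finset.univ.erase i, dist (toRiemannSphere (z i)) (toRiemannSphere (z k))) *
        Real.exp (logEnergy (fun j => toRiemannSphere (z j)) - minEnergy d) := by
  classical
  set x : Fin d → E3 := fun j => toRiemannSphere (z j) with hx
  have hxmem : ∀ j, x j ∈ riemannSphere := fun j => toRS_mem _
  have hxinj : Function.Injective x := fun a b hab => hz (toRS_inj hab)
  have hEm : minEnergy d ≤ logEnergy x := minEnergy_le x hxmem hxinj
  have hPnn : (0:ℝ) ≤ ∏ k ∈ Finset.univ.erase i, dist (x i) (x k) :=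
    Finset.prod_nonneg fun _ _ => dist_nonneg
  by_cases hcase : ∃ k ∈ Finset.univ.erase i, w = z k
  · obtain ⟨k, hk, rfl⟩ := hcase
    have : dist (toRiemannSphere (z k)) (x k) = 0 := by rw [hx]; exact dist_self _
    rw [Finset.prod_eq_zero hk this]
    exact mul_nonneg hPnn (Real.exp_pos _).le
  · push_neg at hcase
    by_cases hwi : w = z i
    · subst hwi
      have h1 : (1:ℝ) ≤ Real.exp (logEnergy x - minEnergy d) := by
        rw [Real.one_le_exp_iff]
        linarith
      exact le_mul_of_one_le_right hPnn h1
    · -- w distinct from all z k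
      have hdistinct : ∀ k, w ≠ z k := by
        intro k
        by_cases hki : k = i
        · rw [hki]; exact hwi
        · exact hcase k (Finset.mem_erase.2 ⟨hki, Finset.mem_univ k⟩)
      set y : Fin d → E3 := Function.update x i (toRiemannSphere w) with hy
      have hymem : ∀ j, y j ∈ riemannSphere := by
        intro j
        by_cases hj : j = i
        · rw [hy, hj, Function.update_self]; exact toRS_mem _
        · rw [hy, Function.update_of_ne hj]; exact hxmem j
      have hyinj : Function.Injective y := by
        intro a b hab
        by_cases ha : a = i <;> by_cases hb : b = i
        · rw [ha, hb]
        · exfalso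
          rw [hy, ha, Function.update_self, Function.update_of_ne hb] at hab
          exact hdistinct b (toRS_inj hab)
        · exfalso
          rw [hy, hb, Function.update_self, Function.update_of_ne ha] at hab
          exact hdistinct a (toRS_inj hab.symm)
        · rw [hy, Function.update_of_ne ha, Function.update_of_ne hb] at hab
          exact hxinj hab
      have hEy : minEnergy d ≤ logEnergy y := minEnergy_le y hymem hyinj
      rw [hy, logEnergy_update] at hEy
      have hsum : ∑ k ∈ Finset.univ.erase i, Real.log (dist (toRiemannSphere w) (x k)) ≤
          (logEnergy x - minEnergy d) +
          ∑ k ∈ Finset.univ.erase i, Real.log (dist (x i) (x k)) := by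
        rw [Finset.sum_sub_distrib] at hEy
        linarith
      have hposw : ∀ k ∈ Finset.univ.erase i, 0 < dist (toRiemannSphere w) (x k) := by
        intro k _
        exact dist_pos.2 fun h => hdistinct k (toRS_inj h)
      have hposi : ∀ k ∈ Finset.univ.erase i, 0 < dist (x i) (x k) := by
        intro k hk
        exact dist_pos.2 fun h => (Finset.mem_erase.1 hk).1 (hxinj h).symm
      have ew : ∏ k ∈ Finset.univ.erase i, dist (toRiemannSphere w) (x k) =
          Real.exp (∑ k ∈ Finset.univ.erase i, Real.log (dist (toRiemannSphere w) (x k))) := by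
        rw [Real.exp_sum]
        exact Finset.prod_congr rfl fun k hk => (Real.exp_log (hposw k hk)).symm
      have ei : ∏ k ∈ Finset.univ.erase i, dist (x i) (x k) =
          Real.exp (∑ k ∈ Finset.univ.erase i, Real.log (dist (x i) (x k))) := by
        rw [Real.exp_sum]
        exact Finset.prod_congr rfl fun k hk => (Real.exp_log (hposi k hk)).symm
      rw [ew, ei, ← Real.exp_add]
      exact Real.exp_le_exp.2 (by linarith)

/-- Beta integral for natural exponents. -/
lemma beta_nat (k m : ℕ) :
    ∫ u in (0:ℝ)..1, u ^ k * (1 - u) ^ m =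
      (k.factorial * m.factorial : ℝ) / (k + m + 1).factorial := by
  induction m generalizing k with
  | zero =>
    simp only [pow_zero, mul_one, integral_pow, Nat.factorial_zero, Nat.cast_one,
      Nat.add_zero]
    rw [Nat.factorial_succ]
    push_cast
    field_simp
    simp
  | succ m ih =>
    have hk1 : ((k:ℝ) + 1) ≠ 0 := by positivity
    have hparts : ∫ u in (0:ℝ)..1, (1 - u) ^ (m+1) * u ^ k =
        ((m:ℝ)+1) / ((k:ℝ)+1) * ∫ u in (0:ℝ)..1, u ^ (k+1) * (1 - u) ^ m := by
      have hu : ∀ x ∈ Set.uIcc (0:ℝ) 1, HasDerivAt (fun y : ℝ => (1 - y)^(m+1))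
          (-(((m:ℝ)+1) * (1 - x)^m)) x := by
        intro x _
        have h1 : HasDerivAt (fun y : ℝ => 1 - y) (-1) x := by
          simpa using (hasDerivAt_id x).const_sub 1
        have := h1.pow (m+1)
        refine this.congr_deriv ?_
        push_cast
        ring
      have hv : ∀ x ∈ Set.uIcc (0:ℝ) 1, HasDerivAt (fun y : ℝ => y^(k+1) / ((k:ℝ)+1))
          (x ^ k) x := by
        intro x _
        have := (hasDerivAt_pow (k+1) x).div_const ((k:ℝ)+1)
        refine this.congr_deriv ?_
        push_cast
        field_simp
      have hiu : IntervalIntegrable (fun x : ℝ => -(((m:ℝ)+1) * (1 - x)^m))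
          MeasureTheory.volume 0 1 := (by continuity : Continuous _).intervalIntegrable _ _
      have hiv : IntervalIntegrable (fun x : ℝ => x ^ k) MeasureTheory.volume 0 1 :=
        (by continuity : Continuous _).intervalIntegrable _ _
      have h := intervalIntegral.integral_mul_deriv_eq_deriv_mul hu hv hiu hiv
      simp only [one_pow, zero_pow, sub_zero, sub_self] at h
      rw [h]
      simp only [zero_pow (Nat.succ_ne_zero m), zero_pow (Nat.succ_ne_zero k), zero_mul,
        mul_zero, zero_div, one_mul, sub_zero, zero_sub]
      rw [← intervalIntegral.integral_neg, ← intervalIntegral.integral_const_mul]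
      apply intervalIntegral.integral_congr
      intro x _
      field_simp
    have hcomm : ∫ u in (0:ℝ)..1, u ^ k * (1 - u) ^ (m+1) =
        ∫ u in (0:ℝ)..1, (1 - u) ^ (m+1) * u ^ k := by
      apply intervalIntegral.integral_congr
      intro x _
      ring
    rw [hcomm, hparts, ih (k+1)]
    rw [show k + (m + 1) + 1 = (k + m + 1) + 1 by ring, show k + 1 + m + 1 = (k + m + 1) + 1 by ring]
    rw [Nat.factorial_succ (k+m+1), Nat.factorial_succ k, Nat.factorial_succ m]
    push_cast
    have h2 : ((k:ℝ) + m + 1 + 1) ≠ 0 := by positivity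
    have h3 : ((k+m+1).factorial : ℝ) ≠ 0 := Nat.cast_ne_zero.2 (Nat.factorial_ne_zero _)
    field_simp

/-- Discrete Parseval. -/
lemma parseval (d : ℕ) (f : Polynomial ℂ) (hdeg : f.natDegree ≤ d) (r : ℝ) (hr : 0 < r) :
    (d + 1 : ℝ) * ∑ k ∈ Finset.range (d + 1), ‖f.coeff k‖ ^ 2 * r ^ (2 * k) =
      ∑ j ∈ Finset.range (d + 1),
        ‖f.eval ((r : ℂ) * Complex.exp (2 * Real.pi * Complex.I * j / (d + 1)))‖ ^ 2 := by
  classical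
  have hn0 : ((d:ℂ) + 1) ≠ 0 := by
    intro h
    have : ((d+1:ℕ):ℂ) = 0 := by push_cast; linear_combination h
    exact Nat.succ_ne_zero d (Nat.cast_eq_zero.1 this)
  set ω : ℂ := Complex.exp (2 * Real.pi * Complex.I / ((d:ℂ) + 1)) with hω
  have hprim : IsPrimitiveRoot ω (d + 1) := by
    have h := Complex.isPrimitiveRoot_exp (d+1) (Nat.succ_ne_zero d)
    have hc : ((d+1:ℕ):ℂ) = (d:ℂ)+1 := by push_cast; ring
    rwa [hc] at h
  have hωn : ω ^ (d+1) = 1 := hprim.pow_eq_one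
  have hω0 : ω ≠ 0 := Complex.exp_ne_zero _
  have hwj : ∀ j : ℕ, (r : ℂ) * Complex.exp (2 * Real.pi * Complex.I * j / ((d:ℂ) + 1)) =
      (r : ℂ) * ω ^ j := by
    intro j
    congr 1
    rw [hω, ← Complex.exp_nat_mul]
    congr 1
    field_simp
  set a : ℕ → ℂ := fun k => f.coeff k * (r:ℝ) ^ k with ha
  have heval : ∀ j : ℕ, f.eval ((r : ℂ) * ω ^ j) = ∑ k ∈ Finset.range (d+1), a k * ω ^ (j * k) := by
    intro j
    rw [Polynomial.eval_eq_sum_range' (lt_of_le_of_lt hdeg (Nat.lt_succ_self d))]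
    apply Finset.sum_congr rfl
    intro k _
    rw [mul_pow, pow_mul, ← pow_mul]
    push_cast
    ring
  have conj_ω_pow : ∀ m : ℕ, (starRingEnd ℂ) (ω ^ m) = (ω ^ m)⁻¹ := by
    intro m
    rw [map_pow, ← inv_pow]
    congr 1
    rw [hω, ← Complex.exp_conj, ← Complex.exp_neg]
    congr 1
    simp only [map_div₀, map_mul, map_add, map_one, map_ofNat, map_natCast,
      Complex.conj_I, Complex.conj_ofReal]
    ring
  have inner_sum : ∀ k ∈ Finset.range (d+1), ∀ l ∈ Finset.range (d+1),
      ∑ j ∈ Finset.range (d+1), ω ^ (j * k) * ((starRingEnd ℂ) (ω ^ (j * l))) =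
        if k = l then ((d:ℂ)+1) else 0 := by
    intro k hk l hl
    have hterm : ∀ j : ℕ, ω ^ (j * k) * ((starRingEnd ℂ) (ω ^ (j * l))) =
        (ω ^ ((k:ℤ) - (l:ℤ))) ^ j := by
      intro j
      rw [conj_ω_pow]
      rw [← zpow_natCast ω (j*k), ← zpow_natCast ω (j*l), ← zpow_neg, ← zpow_add₀ hω0]
      rw [← zpow_natCast (ω ^ ((k:ℤ) - (l:ℤ))) j, ← zpow_mul]
      congr 1
      push_cast
      ring
    simp_rw [hterm]
    by_cases hkl : k = l
    · subst hkl
      rw [if_pos rfl]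
      simp only [sub_self, zpow_zero, one_pow, Finset.sum_const, Finset.card_range,
        nsmul_eq_mul, mul_one]
      push_cast
      ring
    · rw [if_neg hkl]
      have hζ : ω ^ ((k:ℤ) - (l:ℤ)) ≠ 1 := by
        intro hone
        have := (hprim.zpow_eq_one_iff_dvd _).1 hone
        rw [Finset.mem_range] at hk hl
        rcases this with ⟨t, ht⟩
        have hne : (k:ℤ) ≠ (l:ℤ) := by exact_mod_cast hkl
        have h1 : |(k:ℤ) - (l:ℤ)| < ((d+1:ℕ):ℤ) := by
          rw [abs_sub_lt_iff]
          omega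
        have h2 : (k:ℤ) - (l:ℤ) ≠ 0 := sub_ne_zero.2 hne
        rw [ht] at h1 h2
        have hnn : (0:ℤ) < ((d+1:ℕ):ℤ) := by exact_mod_cast Nat.succ_pos d
        have ht0 : t ≠ 0 := by rintro rfl; simp at h2
        have : ((d+1:ℕ):ℤ) ≤ |((d+1:ℕ):ℤ) * t| := by
          rw [abs_mul, abs_of_pos hnn]
          nlinarith [Int.one_le_abs ht0]
        omega
      rw [geom_sum_eq hζ]
      have hpow : (ω ^ ((k:ℤ) - (l:ℤ))) ^ (d+1) = 1 := by
        rw [← zpow_natCast, ← zpow_mul, mul_comm, zpow_mul, zpow_natCast, hωn, one_zpow]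
      rw [hpow, sub_self, zero_div]
  have main : ∑ j ∈ Finset.range (d+1), (f.eval ((r : ℂ) * ω ^ j) *
      (starRingEnd ℂ) (f.eval ((r : ℂ) * ω ^ j))) =
      ((d:ℂ)+1) * ∑ k ∈ Finset.range (d+1), a k * (starRingEnd ℂ) (a k) := by
    calc ∑ j ∈ Finset.range (d+1), (f.eval ((r : ℂ) * ω ^ j) *
        (starRingEnd ℂ) (f.eval ((r : ℂ) * ω ^ j)))
        = ∑ j ∈ Finset.range (d+1), ∑ k ∈ Finset.range (d+1), ∑ l ∈ Finset.range (d+1),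
            (a k * (starRingEnd ℂ) (a l)) * (ω ^ (j * k) * (starRingEnd ℂ) (ω ^ (j * l))) := by
          apply Finset.sum_congr rfl
          intro j _
          rw [heval j, map_sum, Finset.sum_mul_sum]
          apply Finset.sum_congr rfl; intro k _
          apply Finset.sum_congr rfl; intro l _
          rw [map_mul]
          ring
      _ = ∑ k ∈ Finset.range (d+1), ∑ l ∈ Finset.range (d+1),
            (a k * (starRingEnd ℂ) (a l)) * ∑ j ∈ Finset.range (d+1),
              (ω ^ (j * k) * (starRingEnd ℂ) (ω ^ (j * l))) := by
          rw [Finset.sum_comm]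
          apply Finset.sum_congr rfl; intro k _
          rw [Finset.sum_comm]
          apply Finset.sum_congr rfl; intro l _
          rw [Finset.mul_sum]
      _ = ∑ k ∈ Finset.range (d+1), (a k * (starRingEnd ℂ) (a k)) * ((d:ℂ)+1) := by
          apply Finset.sum_congr rfl
          intro k hk
          rw [Finset.sum_eq_single_of_mem k hk]
          · rw [inner_sum k hk k hk, if_pos rfl]
          · intro l hl hlk
            rw [inner_sum k hk l hl, if_neg (Ne.symm hlk), mul_zero]
      _ = ((d:ℂ)+1) * ∑ k ∈ Finset.range (d+1), a k * (starRingEnd ℂ) (a k) := by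
          rw [Finset.mul_sum]
          apply Finset.sum_congr rfl
          intro k _
          ring
  have habs : ∀ w : ℂ, w * (starRingEnd ℂ) w = ((‖w‖ ^ 2 : ℝ) : ℂ) := by
    intro w
    rw [Complex.mul_conj, Complex.sq_norm]
  simp_rw [habs] at main
  have main3 : ∑ j ∈ Finset.range (d+1), ‖f.eval ((r:ℂ) * ω ^ j)‖ ^ 2 =
      ((d:ℝ) + 1) * ∑ k ∈ Finset.range (d+1), ‖a k‖ ^ 2 := by
    have main2 : (((∑ j ∈ Finset.range (d+1), ‖f.eval ((r:ℂ) * ω ^ j)‖ ^ 2 : ℝ)) : ℂ) =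
        ((((d:ℝ) + 1) * ∑ k ∈ Finset.range (d+1), ‖a k‖ ^ 2 : ℝ) : ℂ) := by
      push_cast at main ⊢
      linear_combination main
    exact_mod_cast main2
  have hak : ∀ k : ℕ, ‖a k‖ ^ 2 = ‖f.coeff k‖ ^ 2 * r ^ (2 * k) := by
    intro k
    rw [ha]
    simp only [norm_mul, norm_pow, Complex.norm_real, Real.norm_eq_abs, abs_of_pos hr]
    rw [mul_pow, ← pow_mul]
    ring
  simp_rw [hak] at main3
  have hrw : ∑ j ∈ Finset.range (d+1),
      ‖f.eval ((r : ℂ) * Complex.exp (2 * Real.pi * Complex.I * j / ((d:ℂ) + 1)))‖ ^ 2 =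
      ∑ j ∈ Finset.range (d+1), ‖f.eval ((r:ℂ) * ω ^ j)‖ ^ 2 := by
    apply Finset.sum_congr rfl
    intro j _
    rw [hwj j]
  rw [hrw, main3]


end SSAux

/-- **Condition number and elliptic Fekete points** (Shub–Smale): if `z_1,…,z_d` are the
(distinct) roots of `f(w) = c·∏(w − z_i)` — i.e. of the binary form
`h = c·∏(x_1 − z_i·x_0)` — and `ζ_i` are the corresponding points on `S(1/2)`, then
`max_i μ(h,z_i) ≤ √(d(d+1))·exp(E(ζ_1,…,ζ_d) − m_d)`.  In particular, if the `ζ_i` form a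
set of elliptic Fekete points, then `max_i μ(h,z_i) ≤ √(d(d+1))`. -/
theorem mu_le_of_energy (d : ℕ) (hd : 1 ≤ d) (z : Fin d → ℂ) (hz : Function.Injective z)
    (c : ℂ) (hc : c ≠ 0) (f : Polynomial ℂ)
    (hf : f = Polynomial.C c * ∏ i, (Polynomial.X - Polynomial.C (z i))) :
    (∀ i, muUnivariate d f (z i) ≤
      Real.sqrt ((d : ℝ) * ((d : ℝ) + 1)) *
        Real.exp (logEnergy (fun i => toRiemannSphere (z i)) - minEnergy d)) ∧
    (logEnergy (fun i => toRiemannSphere (z i)) = minEnergy d →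
      ∀ i, muUnivariate d f (z i) ≤ Real.sqrt ((d : ℝ) * ((d : ℝ) + 1))) := by
  classical
  have habsc : 0 < ‖c‖ := by
    simpa using (norm_pos_iff.mpr hc)
  set E := logEnergy (fun i => toRiemannSphere (z i)) with hE
  set m := minEnergy d with hm
  have hEm : m ≤ E := SSAux.minEnergy_le _ (fun j => SSAux.toRS_mem _)
    (fun a b hab => hz (SSAux.toRS_inj hab))
  -- main bound for each i
  have H : ∀ i, muUnivariate d f (z i) ≤
      Real.sqrt ((d : ℝ) * ((d : ℝ) + 1)) * Real.exp (E - m) := by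
    intro i
    set Pd : ℝ := ∏ k ∈ Finset.univ.erase i,
      dist (toRiemannSphere (z i)) (toRiemannSphere (z k)) with hPd
    set P : ℝ := ∏ k ∈ Finset.univ.erase i, ‖z i - z k‖ with hP
    have hPpos : 0 < P := by
      apply Finset.prod_pos
      intro k hk
      have : z i ≠ z k := fun h => (Finset.mem_erase.1 hk).1 (hz h).symm
      simpa [sub_ne_zero] using (norm_pos_iff.mpr (sub_ne_zero.2 this))
    set Qb : ℝ := ‖c‖ ^ 2 * (Pd * Real.exp (E - m)) ^ 2 *
      ∏ k, SSAux.A (z k) with hQb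
    have hPdnn : 0 ≤ Pd := Finset.prod_nonneg fun _ _ => dist_nonneg
    -- |f.eval w|
    have habs_eval : ∀ w : ℂ, ‖f.eval w‖ =
        ‖c‖ * ∏ k, ‖w - z k‖ := by
      intro w
      rw [hf]
      rw [Polynomial.eval_mul, Polynomial.eval_C, Polynomial.eval_prod]
      rw [norm_mul, norm_prod]
      simp
    -- factor formula
    have hfac : ∀ (w : ℂ) (k : Fin d), ‖w - z k‖ ^ 2 =
        dist (toRiemannSphere w) (toRiemannSphere (z k)) ^ 2 *
          (SSAux.A w * SSAux.A (z k)) := by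
      intro w k
      have h0 : (0:ℝ) < SSAux.A w * SSAux.A (z k) :=
        mul_pos (SSAux.A_pos w) (SSAux.A_pos (z k))
      rw [SSAux.dist_toRS, div_pow, Real.sq_sqrt h0.le]
      field_simp
      rw [mul_assoc, mul_div_assoc, div_self h0.ne', mul_one]
    have hptEval : ∀ w : ℂ, ‖f.eval w‖ ^ 2 =
        ‖c‖ ^ 2 * (∏ k, dist (toRiemannSphere w) (toRiemannSphere (z k))) ^ 2 *
          (SSAux.A w ^ d * ∏ k, SSAux.A (z k)) := by
      intro w
      rw [habs_eval, mul_pow, ← Finset.prod_pow]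
      have : ∀ k ∈ (Finset.univ : Finset (Fin d)), ‖w - z k‖ ^ 2 =
          dist (toRiemannSphere w) (toRiemannSphere (z k)) ^ 2 *
            (SSAux.A w * SSAux.A (z k)) := fun k _ => hfac w k
      rw [Finset.prod_congr rfl this, Finset.prod_mul_distrib, Finset.prod_mul_distrib,
        Finset.prod_const, Finset.prod_pow, Finset.card_univ, Fintype.card_fin]
      ring
    -- replacement bound for the full product
    have hrepl : ∀ w : ℂ, (∏ k, dist (toRiemannSphere w) (toRiemannSphere (z k))) ≤
        Pd * Real.exp (E - m) := by
      intro w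
      rw [← Finset.mul_prod_erase _ _ (Finset.mem_univ i)]
      calc dist (toRiemannSphere w) (toRiemannSphere (z i)) *
            ∏ k ∈ Finset.univ.erase i, dist (toRiemannSphere w) (toRiemannSphere (z k))
          ≤ 1 * (Pd * Real.exp (E - m)) := by
            apply mul_le_mul (SSAux.dist_toRS_le_one _ _) (SSAux.replacement z hz i w)
              (Finset.prod_nonneg fun _ _ => dist_nonneg) zero_le_one
        _ = Pd * Real.exp (E - m) := one_mul _
    have hpt : ∀ w : ℂ, ‖f.eval w‖ ^ 2 ≤ Qb * SSAux.A w ^ d := by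
      intro w
      rw [hptEval, hQb]
      have h1 : (∏ k, dist (toRiemannSphere w) (toRiemannSphere (z k))) ^ 2 ≤
          (Pd * Real.exp (E - m)) ^ 2 := by
        apply pow_le_pow_left₀ (Finset.prod_nonneg fun _ _ => dist_nonneg) (hrepl w)
      have hAnn : (0:ℝ) ≤ SSAux.A w ^ d * ∏ k, SSAux.A (z k) := by
        apply mul_nonneg (pow_nonneg (SSAux.A_pos w).le d)
          (Finset.prod_nonneg fun k _ => (SSAux.A_pos (z k)).le)
      calc ‖c‖ ^ 2 * (∏ k, dist (toRiemannSphere w) (toRiemannSphere (z k))) ^ 2 *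
            (SSAux.A w ^ d * ∏ k, SSAux.A (z k))
          ≤ ‖c‖ ^ 2 * (Pd * Real.exp (E - m)) ^ 2 *
            (SSAux.A w ^ d * ∏ k, SSAux.A (z k)) := by
            apply mul_le_mul_of_nonneg_right _ hAnn
            apply mul_le_mul_of_nonneg_left h1 (by positivity)
        _ = ‖c‖ ^ 2 * (Pd * Real.exp (E - m)) ^ 2 * (∏ k, SSAux.A (z k)) *
            SSAux.A w ^ d := by ring
    -- degree
    have hfd : f.natDegree = d := by
      rw [hf]
      have hP0 : (∏ j : Fin d, (Polynomial.X - Polynomial.C (z j))) ≠ 0 := by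
        apply Finset.prod_ne_zero_iff.2
        intro j _
        exact Polynomial.X_sub_C_ne_zero (z j)
      rw [Polynomial.natDegree_mul (Polynomial.C_ne_zero.2 hc) hP0,
        Polynomial.natDegree_C, Polynomial.natDegree_prod _ _
          (fun j _ => Polynomial.X_sub_C_ne_zero (z j))]
      simp [Polynomial.natDegree_X_sub_C]
    -- Parseval bound
    have hsum_r : ∀ r : ℝ, 0 < r →
        ∑ k ∈ Finset.range (d + 1), ‖f.coeff k‖ ^ 2 * r ^ (2 * k) ≤
          Qb * (1 + r ^ 2) ^ d := by
      intro r hr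
      have hpars := SSAux.parseval d f (le_of_eq hfd) r hr
      have hAj : ∀ j : ℕ, SSAux.A ((r : ℂ) *
          Complex.exp (2 * Real.pi * Complex.I * j / ((d:ℂ) + 1))) = 1 + r ^ 2 := by
        intro j
        unfold SSAux.A
        congr 1
        have harg : (2 : ℂ) * Real.pi * Complex.I * j / ((d:ℂ) + 1) =
            ((2 * Real.pi * j / ((d:ℝ) + 1) : ℝ) : ℂ) * Complex.I := by
          push_cast
          ring
        rw [norm_mul, harg, Complex.norm_exp_ofReal_mul_I, Complex.norm_real, Real.norm_eq_abs,
          abs_of_pos hr, mul_one]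
      have hub : ∑ j ∈ Finset.range (d + 1),
          ‖f.eval ((r : ℂ) *
            Complex.exp (2 * Real.pi * Complex.I * j / ((d:ℂ) + 1)))‖ ^ 2 ≤
          ((d:ℝ) + 1) * (Qb * (1 + r ^ 2) ^ d) := by
        calc ∑ j ∈ Finset.range (d + 1), ‖f.eval ((r : ℂ) *
              Complex.exp (2 * Real.pi * Complex.I * j / ((d:ℂ) + 1)))‖ ^ 2
            ≤ ∑ _j ∈ Finset.range (d + 1), Qb * (1 + r ^ 2) ^ d := by
              apply Finset.sum_le_sum
              intro j _
              have := hpt ((r : ℂ) * Complex.exp (2 * Real.pi * Complex.I * j / ((d:ℂ) + 1)))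
              rwa [hAj j] at this
          _ = ((d:ℝ) + 1) * (Qb * (1 + r ^ 2) ^ d) := by
              rw [Finset.sum_const, Finset.card_range]
              push_cast
              ring
      rw [← hpars] at hub
      have hd1 : (0:ℝ) < (d:ℝ) + 1 := by positivity
      exact le_of_mul_le_mul_left hub hd1
    -- pointwise-in-u bound
    have hgu : ∀ u : ℝ, u ∈ Set.Ioo (0:ℝ) 1 →
        ∑ k ∈ Finset.range (d + 1),
          ‖f.coeff k‖ ^ 2 * (u ^ k * (1 - u) ^ (d - k)) ≤ Qb := by
      intro u hu
      obtain ⟨hu0, hu1⟩ := hu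
      have h1u : 0 < 1 - u := by linarith
      set r : ℝ := Real.sqrt (u / (1 - u)) with hrdef
      have hr : 0 < r := Real.sqrt_pos.2 (by positivity)
      have hr2 : r ^ 2 = u / (1 - u) := Real.sq_sqrt (by positivity)
      have h1r2 : 1 + r ^ 2 = 1 / (1 - u) := by
        rw [hr2]; field_simp; ring
      have hterm : ∀ k ∈ Finset.range (d + 1),
          ‖f.coeff k‖ ^ 2 * (u ^ k * (1 - u) ^ (d - k)) =
          (1 - u) ^ d * (‖f.coeff k‖ ^ 2 * r ^ (2 * k)) := by
        intro k hk
        have hkd : k ≤ d := Nat.lt_succ_iff.1 (Finset.mem_range.1 hk)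
        rw [pow_mul, hr2, div_pow]
        have hsplit : (1 - u) ^ d = (1 - u) ^ (d - k) * (1 - u) ^ k := by
          rw [← pow_add]
          congr 1
          omega
        rw [hsplit]
        field_simp
      rw [Finset.sum_congr rfl hterm, ← Finset.mul_sum]
      calc (1 - u) ^ d * ∑ k ∈ Finset.range (d + 1),
            ‖f.coeff k‖ ^ 2 * r ^ (2 * k)
          ≤ (1 - u) ^ d * (Qb * (1 + r ^ 2) ^ d) := by
            apply mul_le_mul_of_nonneg_left (hsum_r r hr) (by positivity)
        _ = Qb := by
            rw [h1r2]
            rw [div_pow, one_pow]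
            field_simp
    -- integrate
    have hQbnn : 0 ≤ Qb := by
      rw [hQb]
      apply mul_nonneg (mul_nonneg (by positivity) (by positivity))
        (Finset.prod_nonneg fun k _ => (SSAux.A_pos (z k)).le)
    set g : ℝ → ℝ := fun u => ∑ k ∈ Finset.range (d + 1),
      ‖f.coeff k‖ ^ 2 * (u ^ k * (1 - u) ^ (d - k)) with hg
    have hgcont : Continuous g := by
      apply continuous_finset_sum
      intro k _
      fun_prop
    have hgint : IntervalIntegrable g MeasureTheory.volume 0 1 :=
      hgcont.intervalIntegrable 0 1
    have hae : g ≤ᵐ[MeasureTheory.volume.restrict (Set.Icc (0:ℝ) 1)] fun _ => Qb := by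
      have h01 : ∀ᵐ u ∂(MeasureTheory.volume.restrict (Set.Icc (0:ℝ) 1)),
          u ≠ 0 ∧ u ≠ 1 := by
        apply MeasureTheory.ae_restrict_of_ae
        have h0 : MeasureTheory.volume ({(0:ℝ)} ∪ {(1:ℝ)} : Set ℝ) = 0 := by
          apply MeasureTheory.measure_union_null <;> exact Real.volume_singleton
        rw [MeasureTheory.ae_iff]
        convert h0 using 2
        ext u
        simp [not_and_or, or_comm]
        tauto
      have hmem : ∀ᵐ u ∂(MeasureTheory.volume.restrict (Set.Icc (0:ℝ) 1)),
          u ∈ Set.Icc (0:ℝ) 1 := MeasureTheory.ae_restrict_mem measurableSet_Icc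
      filter_upwards [h01, hmem] with u hu humem
      exact hgu u ⟨lt_of_le_of_ne humem.1 (Ne.symm hu.1), lt_of_le_of_ne humem.2 hu.2⟩
    have hIg : ∫ u in (0:ℝ)..1, g u ≤ Qb := by
      have := intervalIntegral.integral_mono_ae_restrict (by norm_num : (0:ℝ) ≤ 1)
        hgint ((continuous_const : Continuous fun _ : ℝ => Qb).intervalIntegrable 0 1) hae
      simpa using this
    have hIcalc : ∫ u in (0:ℝ)..1, g u = ∑ k ∈ Finset.range (d + 1),
        ‖f.coeff k‖ ^ 2 *
          ((k.factorial * (d - k).factorial : ℝ) / (d + 1).factorial) := by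
      rw [hg]
      rw [intervalIntegral.integral_finset_sum]
      · apply Finset.sum_congr rfl
        intro k hk
        have hkd : k ≤ d := Nat.lt_succ_iff.1 (Finset.mem_range.1 hk)
        have he : k + (d - k) + 1 = d + 1 := by omega
        rw [intervalIntegral.integral_const_mul, SSAux.beta_nat k (d - k), he]
      · intro k _
        apply Continuous.intervalIntegrable
        fun_prop
    have hSle : ∑ k ∈ Finset.range (d + 1), ‖f.coeff k‖ ^ 2 *
        ((k.factorial * (d - k).factorial : ℝ) / (d + 1).factorial) ≤ Qb := by
      rw [← hIcalc]; exact hIg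
    -- bw norm squared bound
    have hbw2 : ∑ k ∈ Finset.range (d + 1),
        ‖f.coeff k‖ ^ 2 / (d.choose k) ≤ ((d:ℝ) + 1) * Qb := by
      have hident : ∀ k ∈ Finset.range (d + 1),
          ‖f.coeff k‖ ^ 2 / (d.choose k) = ((d:ℝ) + 1) *
            (‖f.coeff k‖ ^ 2 *
              ((k.factorial * (d - k).factorial : ℝ) / (d + 1).factorial)) := by
        intro k hk
        have hkd : k ≤ d := Nat.lt_succ_iff.1 (Finset.mem_range.1 hk)
        have hch := Nat.choose_mul_factorial_mul_factorial hkd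
        have hchR : ((d.choose k : ℝ)) * k.factorial * (d - k).factorial = d.factorial := by
          exact_mod_cast hch
        have hfacsucc : ((d + 1).factorial : ℝ) = ((d:ℝ) + 1) * d.factorial := by
          rw [Nat.factorial_succ]; push_cast; ring
        have hch0 : (0:ℝ) < (d.choose k : ℝ) := by
          exact_mod_cast Nat.choose_pos hkd
        have hf0 : (0:ℝ) < (d.factorial : ℝ) := by exact_mod_cast Nat.factorial_pos d
        have hd1 : ((d:ℝ)+1) ≠ 0 := by positivity
        have hk0 : ((k.factorial : ℝ)) ≠ 0 := by
          exact_mod_cast (Nat.factorial_pos k).ne'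
        have hdk0 : (((d-k).factorial : ℝ)) ≠ 0 := by
          exact_mod_cast (Nat.factorial_pos (d-k)).ne'
        rw [hfacsucc, ← hchR]
        field_simp
      rw [Finset.sum_congr rfl hident, ← Finset.mul_sum]
      apply mul_le_mul_of_nonneg_left hSle (by positivity)
    -- KEY bound on bw norm
    -- derivative evaluation
    have hderiv : ‖f.derivative.eval (z i)‖ = ‖c‖ * P := by
      have hfd' : f.derivative =
          Polynomial.C c * Polynomial.derivative (∏ j, (Polynomial.X - Polynomial.C (z j))) := by
        rw [hf, Polynomial.derivative_C_mul]
      have hmem : z i ∈ Multiset.map z Finset.univ.val :=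
        Multiset.mem_map.2 ⟨i, Finset.mem_univ i, rfl⟩
      have h1 : (∏ j, (Polynomial.X - Polynomial.C (z j))) =
          (Multiset.map (fun a => Polynomial.X - Polynomial.C a)
            (Multiset.map z Finset.univ.val)).prod := by
        rw [Multiset.map_map]
        rfl
      have hevald : Polynomial.eval (z i)
          (Polynomial.derivative (∏ j, (Polynomial.X - Polynomial.C (z j)))) =
          ∏ k ∈ Finset.univ.erase i, (z i - z k) := by
        rw [h1, Polynomial.eval_multiset_prod_X_sub_C_derivative hmem]
        have h2 : (Multiset.map z Finset.univ.val).erase (z i) =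
            Multiset.map z (Finset.univ.val.erase i) :=
          (Multiset.map_erase z hz i Finset.univ.val).symm
        rw [h2, Multiset.map_map]
        rfl
      rw [hfd', Polynomial.eval_mul, Polynomial.eval_C, hevald, norm_mul, norm_prod]
    -- Pd squared
    have hApos := SSAux.A_pos (z i)
    have hPd2 : Pd ^ 2 = ∏ k ∈ Finset.univ.erase i,
        (‖z i - z k‖ ^ 2 / (SSAux.A (z i) * SSAux.A (z k))) := by
      rw [hPd, ← Finset.prod_pow]
      apply Finset.prod_congr rfl
      intro k _
      have h0 : (0:ℝ) < SSAux.A (z i) * SSAux.A (z k) :=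
        mul_pos (SSAux.A_pos (z i)) (SSAux.A_pos (z k))
      rw [SSAux.dist_toRS, div_pow, Real.sq_sqrt h0.le]
    have hcard : (Finset.univ.erase i).card = d - 1 := by
      rw [Finset.card_erase_of_mem (Finset.mem_univ i), Finset.card_univ, Fintype.card_fin]
    have hPdA : Pd ^ 2 * ∏ k, SSAux.A (z k) =
        P ^ 2 * SSAux.A (z i) ^ 2 / SSAux.A (z i) ^ d := by
      calc Pd ^ 2 * ∏ k, SSAux.A (z k)
          = (∏ k ∈ Finset.univ.erase i,
              (‖z i - z k‖ ^ 2 / (SSAux.A (z i) * SSAux.A (z k)))) *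
            (SSAux.A (z i) * ∏ k ∈ Finset.univ.erase i, SSAux.A (z k)) := by
            rw [hPd2, ← Finset.mul_prod_erase _ _ (Finset.mem_univ i)]
        _ = SSAux.A (z i) * ∏ k ∈ Finset.univ.erase i,
              (‖z i - z k‖ ^ 2 / (SSAux.A (z i) * SSAux.A (z k)) * SSAux.A (z k)) := by
            rw [Finset.prod_mul_distrib]
            ring
        _ = SSAux.A (z i) * ∏ k ∈ Finset.univ.erase i,
              (‖z i - z k‖ ^ 2 / SSAux.A (z i)) := by
            congr 1
            apply Finset.prod_congr rfl
            intro k _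
            have hk0 : SSAux.A (z k) ≠ 0 := (SSAux.A_pos (z k)).ne'
            field_simp
        _ = SSAux.A (z i) * (P ^ 2 / SSAux.A (z i) ^ (d - 1)) := by
            rw [Finset.prod_div_distrib, Finset.prod_const, hcard, hP, Finset.prod_pow]
        _ = P ^ 2 * SSAux.A (z i) ^ 2 / SSAux.A (z i) ^ d := by
            have hsplit : SSAux.A (z i) ^ d = SSAux.A (z i) ^ (d - 1) * SSAux.A (z i) := by
              rw [← pow_succ]
              congr 1
              omega
            rw [hsplit]
            have h1 : SSAux.A (z i) ≠ 0 := hApos.ne'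
            have h2 : SSAux.A (z i) ^ (d-1) ≠ 0 := pow_ne_zero _ h1
            field_simp
    -- Qb in closed form
    have hQbeq : Qb = ‖c‖ ^ 2 * Real.exp (E - m) ^ 2 *
        (P ^ 2 * SSAux.A (z i) ^ 2 / SSAux.A (z i) ^ d) := by
      rw [hQb, ← hPdA]
      ring
    -- rpow square identity
    have ha2 : (SSAux.A (z i) ^ (((d:ℝ) - 2) / 2)) ^ 2 =
        SSAux.A (z i) ^ d / SSAux.A (z i) ^ 2 := by
      have e1 : (SSAux.A (z i) ^ (((d:ℝ) - 2) / 2)) ^ 2 =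
          SSAux.A (z i) ^ ((d:ℝ) - 2) := by
        rw [← Real.rpow_natCast (SSAux.A (z i) ^ (((d:ℝ) - 2) / 2)) 2,
          ← Real.rpow_mul hApos.le]
        norm_num
      rw [e1, Real.rpow_sub hApos]
      rw [Real.rpow_natCast]
      congr 1
      rw [show ((2:ℝ)) = ((2:ℕ):ℝ) by norm_num, Real.rpow_natCast]
    -- bw norm squared
    have hbwnn : 0 ≤ bwNormBinary d f := Real.sqrt_nonneg _
    have hbwsq : (bwNormBinary d f) ^ 2 = ∑ k ∈ Finset.range (d + 1),
        ‖f.coeff k‖ ^ 2 / (d.choose k) := by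
      rw [bwNormBinary, Real.sq_sqrt]
      apply Finset.sum_nonneg
      intro k _
      positivity
    have hbw2' : (bwNormBinary d f) ^ 2 ≤ ((d:ℝ) + 1) * Qb := by
      rw [hbwsq]; exact hbw2
    -- final assembly
    have hmu : muUnivariate d f (z i) =
        Real.sqrt d * SSAux.A (z i) ^ (((d:ℝ) - 2) / 2) * bwNormBinary d f /
          (‖c‖ * P) := by
      rw [muUnivariate, hderiv]
      rfl
    rw [hmu, div_le_iff₀ (mul_pos habsc hPpos)]
    have hLnn : 0 ≤ Real.sqrt d * SSAux.A (z i) ^ (((d:ℝ) - 2) / 2) * bwNormBinary d f := by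
      apply mul_nonneg (mul_nonneg (Real.sqrt_nonneg _) (Real.rpow_nonneg hApos.le _)) hbwnn
    have hRnn : 0 ≤ Real.sqrt ((d : ℝ) * ((d : ℝ) + 1)) * Real.exp (E - m) *
        (‖c‖ * P) :=
      mul_nonneg (mul_nonneg (Real.sqrt_nonneg _) (Real.exp_pos _).le)
        (mul_pos habsc hPpos).le
    have hsq : (Real.sqrt d * SSAux.A (z i) ^ (((d:ℝ) - 2) / 2) * bwNormBinary d f) ^ 2 ≤
        (Real.sqrt ((d : ℝ) * ((d : ℝ) + 1)) * Real.exp (E - m) *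
          (‖c‖ * P)) ^ 2 := by
      have e1 : (Real.sqrt d * SSAux.A (z i) ^ (((d:ℝ) - 2) / 2) * bwNormBinary d f) ^ 2 =
          (d : ℝ) * (SSAux.A (z i) ^ d / SSAux.A (z i) ^ 2) * (bwNormBinary d f) ^ 2 := by
        rw [mul_pow, mul_pow, Real.sq_sqrt (Nat.cast_nonneg d), ha2]
      have e2 : (Real.sqrt ((d : ℝ) * ((d : ℝ) + 1)) * Real.exp (E - m) *
          (‖c‖ * P)) ^ 2 =
          (d : ℝ) * ((d : ℝ) + 1) * Real.exp (E - m) ^ 2 * (‖c‖ ^ 2 * P ^ 2) := by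
        rw [mul_pow, mul_pow, Real.sq_sqrt (by positivity : (0:ℝ) ≤ (d : ℝ) * ((d : ℝ) + 1))]
        ring
      rw [e1, e2]
      have step : (d : ℝ) * (SSAux.A (z i) ^ d / SSAux.A (z i) ^ 2) * (bwNormBinary d f) ^ 2 ≤
          (d : ℝ) * (SSAux.A (z i) ^ d / SSAux.A (z i) ^ 2) * (((d:ℝ) + 1) * Qb) := by
        apply mul_le_mul_of_nonneg_left hbw2'
        positivity
      apply le_trans step
      rw [hQbeq]
      have h1 : SSAux.A (z i) ≠ 0 := hApos.ne'
      have h2 : SSAux.A (z i) ^ d ≠ 0 := pow_ne_zero _ h1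
      apply le_of_eq
      field_simp
    exact (pow_le_pow_iff_left₀ hLnn hRnn two_ne_zero).1 hsq

  constructor
  · exact H
  · intro hfek i
    have h1 := H i
    rw [hfek, sub_self, Real.exp_zero, mul_one] at h1
    exact h1


end
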